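/- Let W be a finite simple (C3,C4)-free graph such that for every vertex v of W, the set of vertices of W distinct from v and non-adjacent to v is not an independent set of W. Then the complement of W has no clique cutset; that is, the complement of W is an atom. (This is the key step in the paper's proof that the complement of every k-subdivided wall is an atom.) -/

import Mathlib

open SimpleGraph

/-- `G` contains no induced subgraph isomorphic to `H` (`H`-freeness, via graph embeddings). -/
def Free {V W : Type*} (G : SimpleGraph V) (H : SimpleGraph W) : Prop :=
  IsEmpty (H ↪g G)

/-- `K` is a clique cutset of `G`: a clique whose removal increases the number of
connected components. -/
def IsCliqueCutset {V : Type*} (G : SimpleGraph V) (K : Set V) : Prop :=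
  G.IsClique K ∧
    Nat.card G.ConnectedComponent < Nat.card (G.induce Kᶜ).ConnectedComponent

/-- An atom is a graph with no clique cutset. -/
def IsGraphAtom {V : Type*} (G : SimpleGraph V) : Prop :=
  ∀ K : Set V, ¬ IsCliqueCutset G K

/-- `s` is an independent set of `G`. -/
def IsIndepSet {V : Type*} (G : SimpleGraph V) (s : Set V) : Prop :=
  s.Pairwise fun a b => ¬ G.Adj a b

lemma my_triangle_free {V : Type*} {W : SimpleGraph V} (hC3 : _root_.Free W (cycleGraph 3))
    {a b c : V} (hab : W.Adj a b) (hac : W.Adj a c) (hbc : W.Adj b c) : False := by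
  apply hC3.false (α := _)
  refine ⟨⟨![a, b, c], ?_⟩, ?_⟩
  · have h1 := hab.ne
    have h2 := hac.ne
    have h3 := hbc.ne
    intro i j hij
    fin_cases i <;> fin_cases j <;> simp_all <;> simp_all [eq_comm]
  · intro i j
    show W.Adj (![a, b, c] i) (![a, b, c] j) ↔ _
    rw [cycleGraph_three_eq_top]
    have h1 := hab.ne
    have h2 := hac.ne
    have h3 := hbc.ne
    fin_cases i <;> fin_cases j <;>
      simp_all [W.adj_comm, SimpleGraph.irrefl] <;> simp_all [eq_comm]

lemma my_c4_free {V : Type*} {W : SimpleGraph V} (hC4 : _root_.Free W (cycleGraph 4))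
    {a b c d : V} (hab : W.Adj a b) (hbc : W.Adj b c) (hcd : W.Adj c d)
    (hda : W.Adj d a) (hac : ¬ W.Adj a c) (hbd : ¬ W.Adj b d)
    (hac' : a ≠ c) (hbd' : b ≠ d) : False := by
  apply hC4.false (α := _)
  refine ⟨⟨![a, b, c, d], ?_⟩, ?_⟩
  · have h1 := hab.ne
    have h2 := hbc.ne
    have h3 := hcd.ne
    have h4 := hda.ne.symm
    intro i j hij
    fin_cases i <;> fin_cases j <;> simp_all <;> simp_all [eq_comm]
  · have s1 := hab.symm
    have s2 := hbc.symm
    have s3 := hcd.symm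
    have s4 := hda.symm
    have n1 : ¬ W.Adj c a := fun h => hac h.symm
    have n2 : ¬ W.Adj d b := fun h => hbd h.symm
    intro i j
    show W.Adj (![a, b, c, d] i) (![a, b, c, d] j) ↔ _
    fin_cases i <;> fin_cases j <;>
      simp [cycleGraph_adj, hab, hbc, hcd, hda, s1, s2, s3, s4, hac, hbd, n1, n2] <;> decide

lemma key_lemma {V : Type*} {W : SimpleGraph V}
    (hC3 : _root_.Free W (cycleGraph 3))
    (hnonnbr : ∀ x : V, ¬ _root_.IsIndepSet W {u | u ≠ x ∧ ¬ W.Adj x u})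
    {K : Set V} (hK : _root_.IsIndepSet W K) {u v : V} (huv : W.Adj u v) :
    (∃ w, w ∉ K ∧ w ≠ u ∧ w ≠ v ∧ ¬W.Adj u w ∧ ¬W.Adj v w) ∨
    (∃ a, a ∉ K ∧ a ≠ u ∧ ¬W.Adj u a ∧ W.Adj v a) := by
  have h := hnonnbr u
  rw [_root_.IsIndepSet, Set.Pairwise] at h
  push_neg at h
  obtain ⟨a, ⟨hau, hua⟩, b, ⟨hbu, hub⟩, hab, hWab⟩ := h
  -- not both a, b adjacent to v (triangle with v)
  by_cases hva : W.Adj v a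
  · -- then b not adjacent to v
    have hvb : ¬ W.Adj v b := fun hvb => my_triangle_free hC3 hva hvb hWab
    by_cases hbK : b ∈ K
    · -- a ∉ K since a ~ b ∈ K
      right
      refine ⟨a, fun haK => hK haK hbK hab hWab, hau, hua, hva⟩
    · left
      refine ⟨b, hbK, hbu, fun h => ?_, hub, hvb⟩
      subst h; exact hub huv
  · by_cases hvb : W.Adj v b
    · by_cases haK : a ∈ K
      · right
        refine ⟨b, fun hbK => hK haK hbK hab hWab, hbu, hub, hvb⟩
      · left
        refine ⟨a, haK, hau, fun h => ?_, hua, hva⟩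
        subst h; exact hua huv
    · -- both non-adjacent to v
      by_cases haK : a ∈ K
      · have hbK : b ∉ K := fun hbK => hK haK hbK hab hWab
        left
        refine ⟨b, hbK, hbu, fun h => ?_, hub, hvb⟩
        subst h; exact hub huv
      · left
        refine ⟨a, haK, hau, fun h => ?_, hua, hva⟩
        subst h; exact hua huv

theorem stmt_17 {V : Type*} [Fintype V] (W : SimpleGraph V)
    (hC3 : _root_.Free W (cycleGraph 3)) (hC4 : _root_.Free W (cycleGraph 4))
    (hnonnbr : ∀ x : V, ¬ _root_.IsIndepSet W {u | u ≠ x ∧ ¬ W.Adj x u}) :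
    IsGraphAtom Wᶜ := by
  rintro K ⟨hKclique, hcard⟩
  -- K is independent in W
  have hKindep : _root_.IsIndepSet W K := by
    intro a ha b hb hab
    exact ((hKclique ha hb hab).2 : ¬ W.Adj a b)
  -- Kᶜ nonempty or not
  by_cases hne : Nonempty (↥(Kᶜ : Set V))
  · -- the induced graph is connected
    have hadj : ∀ (x y : ↥(Kᶜ : Set V)), x.1 ≠ y.1 → ¬ W.Adj x.1 y.1 →
        (Wᶜ.induce Kᶜ).Adj x y := by
      intro x y hxy hW
      exact ⟨hxy, hW⟩
    have hpre : (Wᶜ.induce Kᶜ).Preconnected := by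
      intro x y
      obtain ⟨u, hu⟩ := x
      obtain ⟨v, hv⟩ := y
      by_cases huv : u = v
      · subst huv; rfl
      by_cases hWuv : W.Adj u v
      · -- main case
        rcases key_lemma hC3 hnonnbr hKindep hWuv with ⟨w, hwK, hwu, hwv, hwu', hwv'⟩ | ⟨a, haK, hau, hua, hva⟩
        · have h1 : (Wᶜ.induce Kᶜ).Adj ⟨u, hu⟩ ⟨w, hwK⟩ := hadj _ _ (Ne.symm hwu) hwu'
          have h2 : (Wᶜ.induce Kᶜ).Adj ⟨w, hwK⟩ ⟨v, hv⟩ := hadj _ _ hwv (fun hh => hwv' hh.symm)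
          exact h1.reachable.trans h2.reachable
        · rcases key_lemma hC3 hnonnbr hKindep hWuv.symm with ⟨w, hwK, hwv, hwu, hwv', hwu'⟩ | ⟨b, hbK, hbv, hvb, hub⟩
          · have h1 : (Wᶜ.induce Kᶜ).Adj ⟨u, hu⟩ ⟨w, hwK⟩ := hadj _ _ (Ne.symm hwu) hwu'
            have h2 : (Wᶜ.induce Kᶜ).Adj ⟨w, hwK⟩ ⟨v, hv⟩ := hadj _ _ hwv (fun hh => hwv' hh.symm)
            exact h1.reachable.trans h2.reachable
          · -- path u - a - b - v
            have hab : ¬ W.Adj a b := fun h =>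
              my_c4_free hC4 hWuv hva h hub.symm hua hvb (Ne.symm hau) (Ne.symm hbv)
            have hab' : a ≠ b := fun h => hvb (h ▸ hva)
            have h1 : (Wᶜ.induce Kᶜ).Adj ⟨u, hu⟩ ⟨a, haK⟩ := hadj _ _ (Ne.symm hau) hua
            have h2 : (Wᶜ.induce Kᶜ).Adj ⟨a, haK⟩ ⟨b, hbK⟩ := hadj _ _ hab' hab
            have h3 : (Wᶜ.induce Kᶜ).Adj ⟨b, hbK⟩ ⟨v, hv⟩ := hadj _ _ hbv (fun hh => hvb hh.symm)
            exact (h1.reachable.trans h2.reachable).trans h3.reachable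
      · exact ((hadj ⟨u, hu⟩ ⟨v, hv⟩ huv hWuv)).reachable
    have hsub : Subsingleton (Wᶜ.induce Kᶜ).ConnectedComponent := by
      constructor
      intro c d
      refine SimpleGraph.ConnectedComponent.ind₂ (fun x y => ?_) c d
      exact SimpleGraph.ConnectedComponent.sound (hpre x y)
    have h1 : Nat.card (Wᶜ.induce Kᶜ).ConnectedComponent = 1 :=
      @Nat.card_of_subsingleton _ ((Wᶜ.induce Kᶜ).connectedComponentMk hne.some) hsub
    have hVne : Nonempty V := ⟨hne.some.1⟩
    have h2 : 1 ≤ Nat.card Wᶜ.ConnectedComponent := by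
      have : Nonempty Wᶜ.ConnectedComponent := ⟨Wᶜ.connectedComponentMk hVne.some⟩
      have : Finite Wᶜ.ConnectedComponent := Quot.finite _
      exact Nat.one_le_iff_ne_zero.mpr (Nat.card_ne_zero.mpr ⟨‹_›, ‹_›⟩)
    omega
  · have hE : IsEmpty (↥(Kᶜ : Set V)) := not_nonempty_iff.mp hne
    have hE2 : IsEmpty (Wᶜ.induce Kᶜ).ConnectedComponent :=
      ⟨fun c => c.ind (fun x => hE.false x)⟩
    have h0 : Nat.card (Wᶜ.induce Kᶜ).ConnectedComponent = 0 := @Nat.card_of_isEmpty _ hE2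
    omega
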